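/- Let X be a mean-zero real random variable with E[e^{θ₀ X}] ≤ M < ∞ for some θ₀ > 0 and E[(X⁻)²] ≤ V < ∞. Then there is a constant K depending only on θ₀, M, V such that for all θ ∈ (0, θ₀/2], log E[e^{θX}] ≤ (1/2) K θ². -/

import Mathlib

open MeasureTheory

/-- Elementary: `exp t ≤ 1 + t + t²` for `t ≤ 0`. -/
lemma exp_le_quadratic_of_nonpos {t : ℝ} (ht : t ≤ 0) :
    Real.exp t ≤ 1 + t + t ^ 2 := by
  have h1 : -t + 1 ≤ Real.exp (-t) := Real.add_one_le_exp (-t)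
  have h2 : Real.exp t * Real.exp (-t) = 1 := by
    rw [← Real.exp_add]; simp
  have h3 : 0 < Real.exp t := Real.exp_pos t
  have hq : 0 < 1 + t + t ^ 2 := by nlinarith [sq_nonneg (t + 1), sq_nonneg t]
  -- (1 + t + t²) * exp(-t) ≥ (1+t+t²)(1 - t) = 1 - t³ + ... ≥ 1
  have h4 : (1 : ℝ) ≤ (1 + t + t ^ 2) * Real.exp (-t) := by
    have : (1 + t + t ^ 2) * (-t + 1) ≥ 1 := by nlinarith [sq_nonneg t]
    nlinarith
  nlinarith

/-- Elementary: for `t ≥ 0`, `exp t ≤ 1 + t + t² exp t`. -/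
lemma exp_le_one_add_add_sq_mul_exp {t : ℝ} (ht : 0 ≤ t) :
    Real.exp t ≤ 1 + t + t ^ 2 * Real.exp t := by
  have h1 : -t + 1 ≤ Real.exp (-t) := Real.add_one_le_exp (-t)
  have h2 : Real.exp t * Real.exp (-t) = 1 := by rw [← Real.exp_add]; simp
  have h3 : 0 < Real.exp t := Real.exp_pos t
  -- exp t - 1 ≤ t * exp t
  have h4 : Real.exp t - 1 ≤ t * Real.exp t := by nlinarith
  have h5 : Real.exp t - 1 - t ≤ t * (Real.exp t - 1) := by nlinarith
  nlinarith

/-- `x²/4 ≤ exp x` for `x ≥ 0`. -/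
lemma sq_div_four_le_exp {x : ℝ} (hx : 0 ≤ x) : x ^ 2 / 4 ≤ Real.exp x := by
  have h1 : x / 2 + 1 ≤ Real.exp (x / 2) := Real.add_one_le_exp (x / 2)
  have h2 : Real.exp (x / 2) * Real.exp (x / 2) = Real.exp x := by
    rw [← Real.exp_add]; ring_nf
  nlinarith [Real.exp_pos (x / 2)]

/-- Key pointwise inequality. -/
lemma pointwise_bound (θ₀ θ y : ℝ) (hθ₀ : 0 < θ₀) (hθ : 0 < θ) (hθ2 : θ ≤ θ₀ / 2) :
    Real.exp (θ * y) ≤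
      1 + θ * y + θ ^ 2 * ((max (-y) 0) ^ 2 + 16 / θ₀ ^ 2 * Real.exp (θ₀ * y)) := by
  rcases le_or_gt 0 y with hy | hy
  · -- y ≥ 0 : max (-y) 0 = 0
    have hmax : max (-y) 0 = 0 := max_eq_right (by linarith)
    have ht : 0 ≤ θ * y := mul_nonneg hθ.le hy
    have h1 : Real.exp (θ * y) ≤ 1 + θ * y + (θ * y) ^ 2 * Real.exp (θ * y) :=
      exp_le_one_add_add_sq_mul_exp ht
    have hle : θ * y ≤ θ₀ / 2 * y := by
      apply mul_le_mul_of_nonneg_right hθ2 hy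
    have h2 : Real.exp (θ * y) ≤ Real.exp (θ₀ / 2 * y) := Real.exp_le_exp.2 hle
    have h3 : y ^ 2 ≤ 16 / θ₀ ^ 2 * Real.exp (θ₀ / 2 * y) := by
      have := sq_div_four_le_exp (x := θ₀ / 2 * y) (by positivity)
      have hθ₀2 : 0 < θ₀ ^ 2 := by positivity
      rw [div_mul_eq_mul_div, le_div_iff₀ hθ₀2]
      nlinarith [Real.exp_pos (θ₀ / 2 * y)]
    have h4 : Real.exp (θ₀ / 2 * y) * Real.exp (θ₀ / 2 * y) = Real.exp (θ₀ * y) := by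
      rw [← Real.exp_add]; ring_nf
    have h5 : y ^ 2 * Real.exp (θ * y) ≤ 16 / θ₀ ^ 2 * Real.exp (θ₀ * y) := by
      calc y ^ 2 * Real.exp (θ * y) ≤ (16 / θ₀ ^ 2 * Real.exp (θ₀ / 2 * y)) * Real.exp (θ₀ / 2 * y) := by
            apply mul_le_mul h3 h2 (Real.exp_pos _).le (by positivity)
        _ = 16 / θ₀ ^ 2 * Real.exp (θ₀ * y) := by rw [mul_assoc, h4]
    rw [hmax]
    have hθsq : 0 ≤ θ ^ 2 := sq_nonneg θ
    calc Real.exp (θ * y) ≤ 1 + θ * y + (θ * y) ^ 2 * Real.exp (θ * y) := h1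
      _ = 1 + θ * y + θ ^ 2 * (y ^ 2 * Real.exp (θ * y)) := by ring
      _ ≤ 1 + θ * y + θ ^ 2 * (16 / θ₀ ^ 2 * Real.exp (θ₀ * y)) := by
          have := mul_le_mul_of_nonneg_left h5 hθsq
          linarith
      _ = 1 + θ * y + θ ^ 2 * ((0:ℝ) ^ 2 + 16 / θ₀ ^ 2 * Real.exp (θ₀ * y)) := by ring
  · -- y < 0
    have hmax : max (-y) 0 = -y := max_eq_left (by linarith)
    have ht : θ * y ≤ 0 := mul_nonpos_of_nonneg_of_nonpos hθ.le hy.le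
    have h1 : Real.exp (θ * y) ≤ 1 + θ * y + (θ * y) ^ 2 := exp_le_quadratic_of_nonpos ht
    have h2 : 0 ≤ θ ^ 2 * (16 / θ₀ ^ 2 * Real.exp (θ₀ * y)) := by positivity
    rw [hmax]
    nlinarith [h1]

/-- Key second-derivative estimate for the log-moment-generating function: if `X`
has mean zero, `E[e^{θ₀ X}] ≤ M` and `E[(X⁻)²] ≤ V`, then there is a constant `K`
depending only on `θ₀, M, V` with `log E[e^{θ X}] ≤ K θ² / 2` for `θ ∈ (0, θ₀/2]`. -/
theorem logMGF_quadratic_bound (θ₀ M V : ℝ) (hθ₀ : 0 < θ₀) :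
    ∃ K : ℝ, ∀ μ : Measure ℝ, IsProbabilityMeasure μ →
      Integrable (fun y : ℝ => y) μ → (∫ y, y ∂μ = 0) →
      Integrable (fun y : ℝ => Real.exp (θ₀ * y)) μ →
      (∫ y, Real.exp (θ₀ * y) ∂μ ≤ M) →
      Integrable (fun y : ℝ => (max (-y) 0) ^ 2) μ →
      (∫ y, (max (-y) 0) ^ 2 ∂μ ≤ V) →
      ∀ θ : ℝ, 0 < θ → θ ≤ θ₀ / 2 →
        Real.log (∫ y, Real.exp (θ * y) ∂μ) ≤ K * θ ^ 2 / 2 := by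
  set C : ℝ := 16 / θ₀ ^ 2 with hCdef
  have hC : 0 ≤ C := by positivity
  refine ⟨2 * (V + C * M), ?_⟩
  intro μ hprob hint hmean hintexp hMle hintneg hVle θ hθ hθ2
  -- the dominating function
  set g : ℝ → ℝ := fun y => 1 + θ * y + θ ^ 2 * ((max (-y) 0) ^ 2 + C * Real.exp (θ₀ * y))
    with hgdef
  have h1int : Integrable (fun y : ℝ => 1 + θ * y) μ := by
    exact (integrable_const 1).add (hint.const_mul θ)
  have h2int : Integrable
      (fun y : ℝ => θ ^ 2 * ((max (-y) 0) ^ 2 + C * Real.exp (θ₀ * y))) μ := by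
    exact (hintneg.add (hintexp.const_mul C)).const_mul (θ ^ 2)
  have hsumint : Integrable (fun y : ℝ => (max (-y) 0) ^ 2 + C * Real.exp (θ₀ * y)) μ := by
    exact hintneg.add (hintexp.const_mul C)
  have hg_int : Integrable g μ := by
    rw [hgdef]; exact h1int.add h2int
  have hpt : ∀ y : ℝ, Real.exp (θ * y) ≤ g y := fun y =>
    pointwise_bound θ₀ θ y hθ₀ hθ hθ2
  have hmeas : AEStronglyMeasurable (fun y : ℝ => Real.exp (θ * y)) μ :=
    (Real.continuous_exp.comp (continuous_const.mul continuous_id)).aestronglyMeasurable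
  have hexp_int : Integrable (fun y : ℝ => Real.exp (θ * y)) μ := by
    refine hg_int.mono' hmeas (Filter.Eventually.of_forall fun y => ?_)
    rw [Real.norm_eq_abs, abs_of_nonneg (Real.exp_pos _).le]
    exact hpt y
  -- lower bound on the integral
  have hI_ge : (1 : ℝ) ≤ ∫ y, Real.exp (θ * y) ∂μ := by
    have := integral_mono h1int hexp_int (fun y => by
      have := Real.add_one_le_exp (θ * y); linarith)
    rwa [integral_add (integrable_const 1) (hint.const_mul θ), integral_const,
      integral_const_mul, hmean, probReal_univ, mul_zero, smul_eq_mul,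
      mul_one, add_zero] at this
  -- upper bound on the integral
  have hgval : ∫ y, g y ∂μ = 1 + θ ^ 2 * ((∫ y, (max (-y) 0) ^ 2 ∂μ) +
      C * ∫ y, Real.exp (θ₀ * y) ∂μ) := by
    rw [hgdef]
    rw [integral_add h1int h2int, integral_add (integrable_const 1) (hint.const_mul θ),
      integral_const_mul, integral_const_mul, hmean, mul_zero, add_zero,
      integral_add hintneg (hintexp.const_mul C), integral_const_mul, integral_const,
      probReal_univ, smul_eq_mul, mul_one]
  have hI_le : ∫ y, Real.exp (θ * y) ∂μ ≤ 1 + θ ^ 2 * (V + C * M) := by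
    have h := integral_mono hexp_int hg_int hpt
    rw [hgval] at h
    have hθsq : (0:ℝ) ≤ θ ^ 2 := sq_nonneg θ
    have hCM : C * ∫ y, Real.exp (θ₀ * y) ∂μ ≤ C * M := mul_le_mul_of_nonneg_left hMle hC
    nlinarith [hVle]
  have hIpos : 0 < ∫ y, Real.exp (θ * y) ∂μ := lt_of_lt_of_le one_pos hI_ge
  have hlog := Real.log_le_sub_one_of_pos hIpos
  have hθsq : (0:ℝ) ≤ θ ^ 2 := sq_nonneg θ
  calc Real.log (∫ y, Real.exp (θ * y) ∂μ) ≤ (∫ y, Real.exp (θ * y) ∂μ) - 1 := hlog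
    _ ≤ θ ^ 2 * (V + C * M) := by linarith
    _ = 2 * (V + C * M) * θ ^ 2 / 2 := by ring
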